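/- There exist constants C > 0 and x₀ such that for all real x ≥ x₀: ∑ 1/d ≤ C, where the sum is over all positive integers d with x^{1/200} ≤ d ≤ x^{1/10} and τ(d) ≥ (log x)². -/

import Mathlib

lemma conv_tau_le (N : ℕ) :
    ∑ d ∈ Finset.Icc 1 N, (d.divisors.card : ℝ) / d ≤
      (∑ a ∈ Finset.Icc 1 N, (1 : ℝ) / a) ^ 2 := by
  have hrw : ∀ d ∈ Finset.Icc 1 N, (d.divisors.card : ℝ) / d
      = ∑ _e ∈ d.divisors, (1 : ℝ) / d := by
    intro d _
    rw [Finset.sum_const, nsmul_eq_mul]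
    ring
  rw [Finset.sum_congr rfl hrw, Finset.sum_sigma']
  have hmem : ∀ p ∈ (Finset.Icc 1 N).sigma (fun d => d.divisors),
      (p.2, p.1 / p.2) ∈ Finset.Icc 1 N ×ˢ Finset.Icc 1 N := by
    rintro ⟨d, e⟩ hp
    simp only [Finset.mem_sigma, Finset.mem_Icc, Nat.mem_divisors] at hp
    obtain ⟨⟨hd1, hdN⟩, he, hd0⟩ := hp
    have he0 : 0 < e := Nat.pos_of_dvd_of_pos he (Nat.pos_of_ne_zero hd0)
    have heled : e ≤ d := Nat.le_of_dvd (Nat.pos_of_ne_zero hd0) he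
    simp only [Finset.mem_product, Finset.mem_Icc]
    refine ⟨⟨he0, heled.trans hdN⟩, ?_, (Nat.div_le_self _ _).trans hdN⟩
    exact Nat.div_pos heled he0
  calc ∑ p ∈ (Finset.Icc 1 N).sigma (fun d => d.divisors), (1 : ℝ) / p.1
      = ∑ q ∈ ((Finset.Icc 1 N).sigma (fun d => d.divisors)).image
          (fun p => (p.2, p.1 / p.2)), (1 : ℝ) / (q.1 * q.2) := by
        rw [Finset.sum_image]
        · apply Finset.sum_congr rfl
          rintro ⟨d, e⟩ hp
          simp only [Finset.mem_sigma, Finset.mem_Icc, Nat.mem_divisors] at hp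
          obtain ⟨⟨hd1, hdN⟩, he, hd0⟩ := hp
          show (1:ℝ)/d = 1/(e * ((d/e : ℕ) : ℝ))
          rw [← Nat.cast_mul, Nat.mul_div_cancel' he]
        · rintro ⟨d₁, e₁⟩ h₁ ⟨d₂, e₂⟩ h₂ heq
          simp only [Finset.mem_coe, Finset.mem_sigma, Finset.mem_Icc, Nat.mem_divisors] at h₁ h₂
          simp only [Prod.mk.injEq] at heq
          obtain ⟨he, hq⟩ := heq
          subst he
          have hd : d₁ = d₂ := by
            rw [← Nat.mul_div_cancel' h₁.2.1, hq, Nat.mul_div_cancel' h₂.2.1]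
          subst hd
          rfl
    _ ≤ ∑ q ∈ Finset.Icc 1 N ×ˢ Finset.Icc 1 N, (1 : ℝ) / (q.1 * q.2) := by
        apply Finset.sum_le_sum_of_subset_of_nonneg
        · intro q hq
          obtain ⟨p, hp, rfl⟩ := Finset.mem_image.mp hq
          exact hmem p hp
        · intro q _ _
          positivity
    _ = (∑ a ∈ Finset.Icc 1 N, (1 : ℝ) / a) ^ 2 := by
        rw [sq, Finset.sum_mul_sum, Finset.sum_product]
        apply Finset.sum_congr rfl; intro a _
        apply Finset.sum_congr rfl; intro b _
        push_cast
        ring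

/-- `∑ 1/d = O(1)`, where the sum is over `d ∈ [x^{1/200}, x^{1/10}]` with
`τ(d) ≥ (log x)²`. -/
theorem sum_inv_large_tau_bounded :
    ∃ C : ℝ, 0 < C ∧ ∃ x₀ : ℝ, ∀ x : ℝ, x₀ ≤ x →
      ∑ d ∈ ((Finset.Icc 1 ⌊x ^ ((1 : ℝ) / 10)⌋₊).filter
          (fun d : ℕ => x ^ ((1 : ℝ) / 200) ≤ (d : ℝ) ∧
            (Real.log x) ^ 2 ≤ (d.divisors.card : ℝ))),
        (1 : ℝ) / (d : ℝ) ≤ C := by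
  refine ⟨1, one_pos, Real.exp 2, fun x hx => ?_⟩
  set L := Real.log x with hLdef
  have hx1 : (1 : ℝ) ≤ x := le_trans (by nlinarith [Real.add_one_le_exp (2 : ℝ)]) hx
  have hL : (2 : ℝ) ≤ L := by
    rw [hLdef, ← Real.log_exp 2]
    exact Real.log_le_log (Real.exp_pos 2) hx
  have hL2 : (0 : ℝ) < L ^ 2 := by positivity
  set N := ⌊x ^ ((1 : ℝ) / 10)⌋₊ with hN
  set S := (Finset.Icc 1 N).filter
      (fun d : ℕ => x ^ ((1 : ℝ) / 200) ≤ (d : ℝ) ∧ L ^ 2 ≤ (d.divisors.card : ℝ)) with hS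
  have key : L ^ 2 * ∑ d ∈ S, (1 : ℝ) / d ≤ L ^ 2 := by
    have h1 : L ^ 2 * ∑ d ∈ S, (1 : ℝ) / d ≤ ∑ d ∈ S, (d.divisors.card : ℝ) / d := by
      rw [Finset.mul_sum]
      apply Finset.sum_le_sum
      intro d hd
      simp only [hS, Finset.mem_filter, Finset.mem_Icc] at hd
      have hd0 : (0 : ℝ) < d := by exact_mod_cast hd.1.1
      rw [mul_one_div]
      gcongr
      exact hd.2.2
    have h2 : ∑ d ∈ S, (d.divisors.card : ℝ) / d ≤
        ∑ d ∈ Finset.Icc 1 N, (d.divisors.card : ℝ) / d := by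
      apply Finset.sum_le_sum_of_subset_of_nonneg (Finset.filter_subset _ _)
      intro d _ _; positivity
    have h3 := conv_tau_le N
    have h4 : ∑ a ∈ Finset.Icc 1 N, (1 : ℝ) / a ≤ 1 + L / 10 := by
      have heq : ∑ a ∈ Finset.Icc 1 N, (1 : ℝ) / a = (harmonic N : ℝ) := by
        rw [harmonic_eq_sum_Icc]
        push_cast
        simp [one_div]
      rw [heq]
      have := harmonic_floor_le_one_add_log (x ^ ((1 : ℝ) / 10))
        (Real.one_le_rpow hx1 (by norm_num))
      rw [Real.log_rpow (by linarith)] at this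
      rw [hN]
      convert this using 2
      rw [hLdef]; ring
    have h5 : (∑ a ∈ Finset.Icc 1 N, (1 : ℝ) / a) ^ 2 ≤ (1 + L / 10) ^ 2 := by
      apply pow_le_pow_left₀ _ h4
      apply Finset.sum_nonneg; intro a _; positivity
    have h6 : (1 + L / 10) ^ 2 ≤ L ^ 2 := by nlinarith
    linarith
  calc ∑ d ∈ S, (1 : ℝ) / d = L ^ 2 * (∑ d ∈ S, (1 : ℝ) / d) / L ^ 2 := by
        field_simp
    _ ≤ L ^ 2 / L ^ 2 := by gcongr
    _ ≤ 1 := by rw [div_self (ne_of_gt hL2)]
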